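/- arXiv:1812.11197 — 2 statements merged into one kernel-verified Lean document; each statement's English description precedes it below -/
import Mathlib

section
/- The Wright function M_μ(z) = ∑_{n=1}^∞ (-z)^{n-1} / ((n-1)! Γ(1 - μn)) defines an entire function of z for each fixed μ with 0 < μ < 1. -/
open scoped Real Nat
open Real Filter

/-- The Wright function `M_μ(z) = ∑_{n=1}^∞ (-z)^{n-1} / ((n-1)! Γ(1-μn))`, written with the
index shift `n ↦ n+1`.  Terms where `1 - μ(n+1)` is a nonpositive integer vanish, since
`Real.Gamma` is `0` there (so its inverse is `0`). -/
noncomputable def wright (μ : ℝ) (z : ℂ) : ℂ :=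
  ∑' n : ℕ, (-z) ^ n * ((n.factorial : ℂ) * (Real.Gamma (1 - μ * (n + 1)) : ℂ))⁻¹

namespace WrightAux

/-- Log-convexity of Gamma: `Γ(x+μ) ≤ Γ(x) * x^μ` for `x > 0`, `0 ≤ μ ≤ 1`. -/
lemma gamma_add_le (μ x : ℝ) (hμ0 : 0 ≤ μ) (hμ1 : μ ≤ 1) (hx : 0 < x) :
    Real.Gamma (x + μ) ≤ Real.Gamma x * x ^ μ := by
  have h := Real.convexOn_log_Gamma.2 (Set.mem_Ioi.2 hx)
    (Set.mem_Ioi.2 (by linarith : (0:ℝ) < x + 1)) (by linarith : (0:ℝ) ≤ 1 - μ) hμ0 (by ring)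
  have hxy : (1 - μ) • x + μ • (x + 1) = x + μ := by simp [smul_eq_mul]; ring
  rw [hxy] at h
  simp only [Function.comp, smul_eq_mul] at h
  have hG : 0 < Real.Gamma x := Real.Gamma_pos_of_pos hx
  have hG1 : Real.Gamma (x + 1) = x * Real.Gamma x := Real.Gamma_add_one hx.ne'
  rw [hG1, Real.log_mul hx.ne' hG.ne'] at h
  have h2 : Real.log (Real.Gamma (x + μ)) ≤ Real.log (Real.Gamma x) + μ * Real.log x := by
    nlinarith
  have hGμ : 0 < Real.Gamma (x + μ) := Real.Gamma_pos_of_pos (by linarith)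
  calc Real.Gamma (x + μ) = Real.exp (Real.log (Real.Gamma (x + μ))) :=
        (Real.exp_log hGμ).symm
    _ ≤ Real.exp (Real.log (Real.Gamma x) + μ * Real.log x) := Real.exp_le_exp.2 h2
    _ = Real.Gamma x * x ^ μ := by
        rw [Real.exp_add, Real.exp_log hG, Real.rpow_def_of_pos hx, mul_comm μ (Real.log x)]

/-- Reflection bound: `|Γ(1-x)⁻¹| ≤ Γ(x)/π` for `x > 0`. -/
lemma inv_gamma_bound (x : ℝ) (hx : 0 < x) :
    |(Real.Gamma (1 - x))⁻¹| ≤ Real.Gamma x / Real.pi := by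
  have hG : 0 < Real.Gamma x := Real.Gamma_pos_of_pos hx
  have hrefl := Real.Gamma_mul_Gamma_one_sub x
  by_cases hs : Real.sin (Real.pi * x) = 0
  · have : Real.Gamma (1 - x) = 0 := by
      rw [hs, div_zero] at hrefl
      rcases mul_eq_zero.1 hrefl with h | h
      · exact absurd h hG.ne'
      · exact h
    rw [this, inv_zero, abs_zero]
    positivity
  · have hG1x : Real.Gamma (1 - x) = Real.pi / (Real.sin (Real.pi * x) * Real.Gamma x) := by
      rw [eq_div_iff (mul_ne_zero hs hG.ne')]
      calc Real.Gamma (1 - x) * (Real.sin (Real.pi * x) * Real.Gamma x)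
          = Real.Gamma x * Real.Gamma (1 - x) * Real.sin (Real.pi * x) := by ring
        _ = Real.pi / Real.sin (Real.pi * x) * Real.sin (Real.pi * x) := by rw [hrefl]
        _ = Real.pi := div_mul_cancel₀ _ hs
    have h1 : (Real.Gamma (1 - x))⁻¹ = Real.Gamma x * Real.sin (Real.pi * x) / Real.pi := by
      rw [hG1x, inv_div]; ring
    rw [h1, abs_div, abs_of_pos Real.pi_pos, abs_mul, abs_of_pos hG]
    have hsin : |Real.sin (Real.pi * x)| ≤ 1 :=
      abs_le.2 ⟨Real.neg_one_le_sin _, Real.sin_le_one _⟩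
    have hle : Real.Gamma x * |Real.sin (Real.pi * x)| ≤ Real.Gamma x := by nlinarith
    exact div_le_div_of_nonneg_right hle Real.pi_pos.le

end WrightAux

set_option maxHeartbeats 1000000 in
/-- For each fixed `0 < μ < 1`, the Wright function is an entire function of `z`. -/
theorem wright_entire (μ : ℝ) (hμ0 : 0 < μ) (hμ1 : μ < 1) :
    Differentiable ℂ (wright μ) := by
  classical
  set c : ℕ → ℂ := fun n =>
    (-1) ^ n * ((n.factorial : ℂ) * (Real.Gamma (1 - μ * (n + 1)) : ℂ))⁻¹ with hc
  set p := FormalMultilinearSeries.ofScalars ℂ c with hp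
  -- the majorant
  set b : ℕ → ℝ := fun n => Real.Gamma (μ * (n + 1)) / (Real.pi * n.factorial) with hb
  have hbpos : ∀ n, 0 < b n := fun n => by
    have : 0 < Real.Gamma (μ * (n + 1)) := Real.Gamma_pos_of_pos (by positivity)
    positivity
  have hcb : ∀ n, ‖c n‖ ≤ b n := by
    intro n
    have hx : 0 < μ * (n + 1) := by positivity
    have hinv := WrightAux.inv_gamma_bound (μ * (n + 1)) hx
    have hnorm : ‖c n‖ = ((n.factorial : ℝ) * |Real.Gamma (1 - μ * (n + 1))|)⁻¹ := by
      rw [hc]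
      simp only [norm_mul, norm_pow, norm_neg, norm_one, one_pow, one_mul, norm_inv,
        Complex.norm_natCast, Complex.norm_real, Real.norm_eq_abs]
    rw [hnorm, mul_inv]
    calc ((n.factorial : ℝ))⁻¹ * |Real.Gamma (1 - μ * (n + 1))|⁻¹
        ≤ ((n.factorial : ℝ))⁻¹ * (Real.Gamma (μ * (n + 1)) / Real.pi) :=
          mul_le_mul_of_nonneg_left (by rw [← abs_inv]; exact hinv) (by positivity)
      _ = b n := by
          show _ = Real.Gamma (μ * ((n:ℝ) + 1)) / (Real.pi * (n.factorial : ℝ))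
          rw [div_eq_mul_inv, div_eq_mul_inv, mul_inv]; ring
  -- summability of the majorant against any power
  have hsum : ∀ s : ℝ, 1 ≤ s → Summable (fun n => b n * s ^ n) := by
    intro s hs
    have hs0 : 0 < s := lt_of_lt_of_le one_pos hs
    apply summable_of_ratio_norm_eventually_le (r := 1/2) (by norm_num)
    have hten : Tendsto (fun n : ℕ => ((n : ℝ) + 2) ^ (μ - 1) * s) atTop (nhds 0) := by
      have h1 : Tendsto (fun x : ℝ => x ^ (μ - 1)) atTop (nhds 0) := by
        have := tendsto_rpow_neg_atTop (y := 1 - μ) (by linarith)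
        simpa [neg_sub] using this
      have h2 : Tendsto (fun n : ℕ => (n : ℝ) + 2) atTop atTop :=
        tendsto_atTop_add_const_right _ 2 tendsto_natCast_atTop_atTop
      simpa using ((h1.comp h2).mul_const s)
    have hev : ∀ᶠ n : ℕ in atTop, ((n : ℝ) + 2) ^ (μ - 1) * s ≤ 1/4 := by
      filter_upwards [hten.eventually (eventually_le_nhds (by norm_num : (0:ℝ) < 1/4))]
        with n hn using hn
    filter_upwards [hev] with n hn
    have hn0 : (0:ℝ) ≤ (n : ℝ) := Nat.cast_nonneg n
    have hx : 0 < μ * ((n : ℝ) + 1) := by positivity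
    set A : ℝ := Real.Gamma (μ * ((n : ℝ) + 1)) with hA
    set B : ℝ := Real.Gamma (μ * ((n : ℝ) + 2)) with hB
    have hApos : 0 < A := Real.Gamma_pos_of_pos hx
    have hBpos : 0 < B := Real.Gamma_pos_of_pos (by positivity)
    have hkey : B ≤ A * (μ * ((n : ℝ) + 1)) ^ μ := by
      have := WrightAux.gamma_add_le μ (μ * ((n : ℝ) + 1)) hμ0.le hμ1.le hx
      have heq : μ * ((n : ℝ) + 1) + μ = μ * ((n : ℝ) + 2) := by ring
      rw [heq] at this
      exact this
    have hpow : (μ * ((n : ℝ) + 1)) ^ μ ≤ ((n : ℝ) + 2) ^ μ := by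
      apply Real.rpow_le_rpow hx.le _ hμ0.le
      nlinarith
    -- key numeric estimate: B * s ≤ (1/2) * (n+1) * A
    have hnp2 : ((n : ℝ) + 2) ^ μ = ((n : ℝ) + 2) ^ (μ - 1) * ((n : ℝ) + 2) := by
      rw [← Real.rpow_add_one (by positivity : ((n:ℝ)+2) ≠ 0)]
      norm_num
    have hBs : B * s ≤ (1/2) * ((n : ℝ) + 1) * A := by
      have h3 : B * s ≤ A * (((n : ℝ) + 2) ^ μ * s) := by
        have hB2 : B ≤ A * ((n : ℝ) + 2) ^ μ :=
          hkey.trans (mul_le_mul_of_nonneg_left hpow hApos.le)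
        calc B * s ≤ (A * ((n : ℝ) + 2) ^ μ) * s :=
              mul_le_mul_of_nonneg_right hB2 hs0.le
          _ = A * (((n : ℝ) + 2) ^ μ * s) := by ring
      have h4 : ((n : ℝ) + 2) ^ μ * s ≤ (1/4) * ((n : ℝ) + 2) := by
        rw [hnp2]
        have h4' := mul_le_mul_of_nonneg_right hn
          (show (0:ℝ) ≤ (n : ℝ) + 2 by positivity)
        calc ((n : ℝ) + 2) ^ (μ - 1) * ((n : ℝ) + 2) * s
            = (((n : ℝ) + 2) ^ (μ - 1) * s) * ((n : ℝ) + 2) := by ring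
          _ ≤ 1/4 * ((n : ℝ) + 2) := h4'
      have h5 : (1/4) * ((n : ℝ) + 2) ≤ (1/2) * ((n : ℝ) + 1) := by linarith
      calc B * s ≤ A * (((n : ℝ) + 2) ^ μ * s) := h3
        _ ≤ A * ((1/4) * ((n : ℝ) + 2)) := mul_le_mul_of_nonneg_left h4 hApos.le
        _ ≤ A * ((1/2) * ((n : ℝ) + 1)) := mul_le_mul_of_nonneg_left h5 hApos.le
        _ = (1/2) * ((n : ℝ) + 1) * A := by ring
    -- now conclude the ratio inequality
    have hfpos : 0 < (n.factorial : ℝ) := by exact_mod_cast n.factorial_pos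
    have hsn : 0 < s ^ n := pow_pos hs0 n
    have e1 : b (n + 1) = B / (Real.pi * (((n : ℝ) + 1) * (n.factorial : ℝ))) := by
      have harg : μ * (((n : ℕ) + 1 : ℕ) + 1 : ℝ) = μ * ((n : ℝ) + 2) := by push_cast; ring
      have hfact : (((n + 1).factorial : ℕ) : ℝ) = ((n : ℝ) + 1) * (n.factorial : ℝ) := by
        push_cast [Nat.factorial_succ]; ring
      show Real.Gamma (μ * (((n : ℕ) + 1 : ℕ) + 1 : ℝ)) /
        (Real.pi * (((n + 1).factorial : ℕ) : ℝ)) = _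
      rw [harg, hfact, hB]
    have e2 : b n = A / (Real.pi * (n.factorial : ℝ)) := by
      show Real.Gamma (μ * ((n : ℝ) + 1)) / (Real.pi * (n.factorial : ℝ)) = _
      rw [hA]
    have hbn : b (n + 1) * s ^ (n + 1) ≤ (1/2) * (b n * s ^ n) := by
      rw [e1, e2]
      have e4 : B / (Real.pi * (((n:ℝ) + 1) * (n.factorial : ℝ))) * s ^ (n + 1)
          = (B * s * s ^ n) / (Real.pi * (((n:ℝ) + 1) * (n.factorial : ℝ))) := by
        rw [pow_succ]; ring
      have e3 : (1/2) * (A / (Real.pi * (n.factorial : ℝ)) * s ^ n)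
          = (A * s ^ n) / (2 * (Real.pi * (n.factorial : ℝ))) := by ring
      rw [e4, e3, div_le_div_iff₀ (by positivity) (by positivity)]
      have hmul := mul_le_mul_of_nonneg_right hBs
        (by positivity : (0:ℝ) ≤ Real.pi * (n.factorial : ℝ) * s ^ n)
      nlinarith [hmul]
    calc ‖b (n + 1) * s ^ (n + 1)‖ = b (n + 1) * s ^ (n + 1) := by
          rw [Real.norm_of_nonneg]; positivity
      _ ≤ (1/2) * (b n * s ^ n) := hbn
      _ = (1/2) * ‖b n * s ^ n‖ := by
          rw [Real.norm_of_nonneg]; positivity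
  -- radius is infinite
  have hrad : p.radius = ⊤ := by
    apply p.radius_eq_top_of_summable_norm
    intro r
    set s : ℝ := max (r : ℝ) 1 with hsdef
    have hs1 : 1 ≤ s := le_max_right _ _
    have hrs : (r : ℝ) ≤ s := le_max_left _ _
    refine Summable.of_nonneg_of_le (fun n => by positivity) (fun n => ?_) (hsum s hs1)
    rw [hp, FormalMultilinearSeries.ofScalars_norm]
    exact mul_le_mul (hcb n) (pow_le_pow_left₀ r.coe_nonneg hrs n)
      (by positivity) (hbpos n).le
  -- the sum of p is wright μ
  have hsum_eq : wright μ = p.sum := by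
    funext z
    have h1 : p.sum z = ∑' n, c n • z ^ n :=
      FormalMultilinearSeries.ofScalars_sum_eq (E := ℂ) c z
    rw [h1]
    simp only [wright, hc, smul_eq_mul]
    apply tsum_congr
    intro n
    rw [neg_pow]
    ring
  have hball : HasFPowerSeriesOnBall p.sum p 0 ⊤ := by
    have h := p.hasFPowerSeriesOnBall (by rw [hrad]; exact ENNReal.zero_lt_top)
    rwa [hrad] at h
  rw [hsum_eq]
  intro z
  have hz : z ∈ Metric.eball (0 : ℂ) ⊤ := by simp
  exact (hball.analyticAt_of_mem hz).differentiableAt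
end

section
/- (Mittag-Leffler form of ψ-Gronwall) Under the hypotheses of the ψ-Gronwall inequality, if additionally v is nondecreasing on [a,b], then u(t) ≤ v(t) · E_α(g(t) Γ(α) (ψ(t)-ψ(a))^α) for all t ∈ [a,b], where E_α(z) = ∑_{k=0}^∞ z^k / Γ(αk+1) is the one-parameter Mittag-Leffler function. -/
open Set MeasureTheory Filter

set_option maxHeartbeats 1600000


lemma gamma_mono_aux {y z : ℝ} (hy : 2 ≤ y) (hyz : y ≤ z) : Real.Gamma y ≤ Real.Gamma z := by
  rcases eq_or_lt_of_le hyz with h | h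
  · rw [h]
  · exact (Real.Gamma_strictMonoOn_Ici hy (hy.trans hyz) h).le

lemma aux_summable {α β : ℝ} (hα : 0 < α) (hβ : 0 < β) {x : ℝ} (hx : 0 ≤ x) :
    Summable (fun k : ℕ => x ^ k / Real.Gamma (α * k + β)) := by
  rcases eq_or_lt_of_le hx with hx0 | hxpos
  · apply summable_of_ne_finset_zero (s := {0})
    intro k hk
    simp only [Finset.mem_singleton] at hk
    simp [← hx0, zero_pow hk]
  have hΓpos : ∀ k : ℕ, 0 < Real.Gamma (α * k + β) := fun k =>
    Real.Gamma_pos_of_pos (by positivity)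
  set c : ℕ → ℝ := fun k => x ^ k / Real.Gamma (α * k + β) with hc
  have hcpos : ∀ k, 0 < c k := fun k => div_pos (pow_pos hxpos k) (hΓpos k)
  obtain ⟨q, hq1, hq0⟩ : ∃ q : ℕ, 1 ≤ α * q ∧ 0 < q := by
    refine ⟨⌈α⁻¹⌉₊ + 1, ?_, Nat.succ_pos _⟩
    have h1 : (α⁻¹ : ℝ) ≤ ⌈α⁻¹⌉₊ := Nat.le_ceil _
    have : (α⁻¹ : ℝ) ≤ (⌈α⁻¹⌉₊ + 1 : ℕ) := by push_cast; linarith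
    calc (1:ℝ) = α * α⁻¹ := (mul_inv_cancel₀ hα.ne').symm
      _ ≤ α * (⌈α⁻¹⌉₊ + 1 : ℕ) := by gcongr
  set K : ℕ := ⌈(1 + 2 * x ^ q) / α⌉₊ with hK
  have hKprop : ∀ k : ℕ, K ≤ k → 1 + 2 * x ^ q ≤ α * k := by
    intro k hk
    have h1 : ((1 + 2 * x ^ q) / α : ℝ) ≤ K := Nat.le_ceil _
    have h2 : (K : ℝ) ≤ k := by exact_mod_cast hk
    have := (div_le_iff₀ hα).mp (h1.trans h2)
    linarith [this]
  have key : ∀ k : ℕ, K ≤ k → c (k + q) ≤ (1/2) * c k := by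
    intro k hk
    have h1 : 1 + 2 * x ^ q ≤ α * k := hKprop k hk
    have hxq : (0:ℝ) < x ^ q := pow_pos hxpos q
    have hden : (2 * x ^ q) * Real.Gamma (α * k + β) ≤ Real.Gamma (α * (k + q) + β) := by
      have hmono : Real.Gamma (α * k + β + 1) ≤ Real.Gamma (α * (k + q) + β) := by
        apply gamma_mono_aux
        · linarith
        · push_cast; nlinarith
      have hrec : Real.Gamma (α * k + β + 1) = (α * k + β) * Real.Gamma (α * k + β) :=
        Real.Gamma_add_one (by positivity)
      nlinarith [hΓpos k, hmono, hrec]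
    have hΓq := Real.Gamma_pos_of_pos (show (0:ℝ) < α * (k+q) + β by positivity)
    calc c (k + q) = x ^ k * x ^ q / Real.Gamma (α * (k + q) + β) := by
          rw [hc]; simp only [pow_add]; norm_cast
      _ ≤ x ^ k * x ^ q / ((2 * x ^ q) * Real.Gamma (α * k + β)) := by
          apply div_le_div_of_nonneg_left (by positivity) (by positivity) hden
      _ = (1/2) * c k := by
          rw [hc]
          field_simp
  set M : ℝ := ∑ i ∈ Finset.range q, c (K + i) with hM
  have hMnonneg : 0 ≤ M := Finset.sum_nonneg fun i _ => (hcpos _).le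
  have claim : ∀ k : ℕ, c (K + k) ≤ M * (1/2 : ℝ) ^ (k / q) := by
    intro k
    induction k using Nat.strong_induction_on with
    | _ k ih =>
      rcases lt_or_ge k q with hkq | hkq
      · have h1 : c (K + k) ≤ M :=
          Finset.single_le_sum (f := fun i => c (K + i)) (fun i _ => (hcpos _).le)
            (Finset.mem_range.mpr hkq)
        simpa [Nat.div_eq_of_lt hkq] using h1
      · have hsub : k - q < k := Nat.sub_lt (lt_of_lt_of_le hq0 hkq) hq0
        have h1 : c (K + k) ≤ (1/2) * c (K + (k - q)) := by
          have h2 := key (K + (k - q)) (Nat.le_add_right _ _)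
          have e : K + (k - q) + q = K + k := by omega
          rwa [e] at h2
        have h2 := ih (k - q) hsub
        have hdiv : k / q = (k - q) / q + 1 := by
          rw [Nat.div_eq_sub_div hq0 hkq]
        calc c (K + k) ≤ (1/2) * c (K + (k - q)) := h1
          _ ≤ (1/2) * (M * (1/2 : ℝ) ^ ((k - q) / q)) := by
              apply mul_le_mul_of_nonneg_left h2 (by norm_num)
          _ = M * (1/2 : ℝ) ^ (k / q) := by rw [hdiv, pow_succ]; ring
  set r : ℝ := (1/2 : ℝ) ^ ((q : ℝ)⁻¹) with hr
  have hrpos : (0:ℝ) < r := Real.rpow_pos_of_pos (by norm_num) _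
  have hrlt : r < 1 := Real.rpow_lt_one (by norm_num) (by norm_num) (by positivity)
  have hgeo : Summable (fun k : ℕ => (2 * M) * r ^ k) :=
    (summable_geometric_of_lt_one hrpos.le hrlt).mul_left _
  have hbound : ∀ k : ℕ, c (K + k) ≤ (2 * M) * r ^ k := by
    intro k
    refine (claim k).trans ?_
    have hqR : (0:ℝ) < (q:ℝ) := by exact_mod_cast hq0
    have h1 : (k : ℝ) / (q : ℝ) - 1 ≤ ((k / q : ℕ) : ℝ) := by
      have hmod := Nat.div_add_mod k q
      have hlt : k % q < q := Nat.mod_lt _ hq0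
      have he : (k : ℝ) = (q : ℝ) * ((k / q : ℕ) : ℝ) + ((k % q : ℕ) : ℝ) := by
        exact_mod_cast congrArg (Nat.cast : ℕ → ℝ) hmod.symm
      have hlt' : ((k % q : ℕ) : ℝ) < (q : ℝ) := by exact_mod_cast hlt
      rw [sub_le_iff_le_add, div_le_iff₀ hqR]
      nlinarith
    have e1 : ((1:ℝ)/2) ^ (k / q : ℕ) = (1/2 : ℝ) ^ (((k / q : ℕ) : ℝ)) :=
      (Real.rpow_natCast _ _).symm
    have e2 : (1/2 : ℝ) ^ (((k / q : ℕ) : ℝ)) ≤ (1/2 : ℝ) ^ ((k : ℝ) / (q : ℝ) - 1) :=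
      Real.rpow_le_rpow_of_exponent_ge (by norm_num) (by norm_num) h1
    have e3 : (1/2 : ℝ) ^ ((k : ℝ) / (q : ℝ) - 1) = 2 * r ^ k := by
      have h4 : (r : ℝ) ^ k = (1/2 : ℝ) ^ ((k:ℝ) / (q:ℝ)) := by
        rw [hr, ← Real.rpow_natCast ((1/2:ℝ) ^ ((q:ℝ)⁻¹)) k, ← Real.rpow_mul (by norm_num)]
        congr 1
        field_simp
      rw [Real.rpow_sub (by norm_num), Real.rpow_one, h4]
      ring
    calc M * (1/2 : ℝ) ^ (k / q) ≤ M * (2 * r ^ k) := by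
          apply mul_le_mul_of_nonneg_left _ hMnonneg
          rw [e1]; rw [e3] at e2; exact e2
      _ = (2 * M) * r ^ k := by ring
  have hshift : Summable (fun k : ℕ => c (K + k)) :=
    hgeo.of_nonneg_of_le (fun k => (hcpos _).le) hbound
  have : Summable (fun k : ℕ => c (k + K)) := by simpa [add_comm] using hshift
  exact (summable_nat_add_iff K).mp this

lemma aux_tendsto {α β : ℝ} (hα : 0 < α) (hβ : 0 < β) {x : ℝ} (hx : 0 ≤ x) :
    Tendsto (fun n : ℕ => x ^ n / Real.Gamma (α * n + β)) atTop (nhds 0) :=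
  (aux_summable hα hβ hx).tendsto_atTop_zero

lemma aux_tendsto' {α : ℝ} (hα : 0 < α) {x : ℝ} (hx : 0 ≤ x) :
    Tendsto (fun n : ℕ => x ^ n / Real.Gamma (α * n)) atTop (nhds 0) := by
  rw [← tendsto_add_atTop_iff_nat 1]
  have h : (fun n : ℕ => x ^ (n + 1) / Real.Gamma (α * (n + 1 : ℕ)))
      = fun n : ℕ => x * (x ^ n / Real.Gamma (α * n + α)) := by
    funext n
    rw [pow_succ]
    push_cast
    rw [mul_add, mul_one]
    ring
  rw [h]
  have := (aux_tendsto hα hα hx).const_mul x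
  simpa using this

lemma beta01 {p q : ℝ} (hp : 0 < p) (hq : 0 < q) :
    IntervalIntegrable (fun x : ℝ => x ^ (p-1) * (1-x) ^ (q-1)) volume 0 1 ∧
    ∫ x in (0:ℝ)..1, x ^ (p-1) * (1-x) ^ (q-1)
      = Real.Gamma p * Real.Gamma q / Real.Gamma (p+q) := by
  set fr : ℝ → ℝ := fun x => x ^ (p-1) * (1-x) ^ (q-1) with hfr
  have hfc : IntervalIntegrable
      (fun x : ℝ => (x : ℂ) ^ ((p:ℂ) - 1) * (1 - (x : ℂ)) ^ ((q:ℂ) - 1)) volume 0 1 :=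
    Complex.betaIntegral_convergent (by simpa using hp) (by simpa using hq)
  have heq : ∀ x ∈ Icc (0:ℝ) 1,
      ((fr x : ℝ) : ℂ) = (x : ℂ) ^ ((p:ℂ) - 1) * (1 - (x : ℂ)) ^ ((q:ℂ) - 1) := by
    intro x hx
    have h0 : (0:ℝ) ≤ x := hx.1
    have h1 : (0:ℝ) ≤ 1 - x := by linarith [hx.2]
    rw [show ((p:ℂ) - 1) = ((p - 1 : ℝ) : ℂ) by push_cast; ring,
      show ((q:ℂ) - 1) = ((q - 1 : ℝ) : ℂ) by push_cast; ring,
      show (1 - (x:ℂ)) = ((1 - x : ℝ) : ℂ) by push_cast; ring,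
      ← Complex.ofReal_cpow h0, ← Complex.ofReal_cpow h1, ← Complex.ofReal_mul]
  have h01 : (0:ℝ) ≤ 1 := by norm_num
  have hint : IntervalIntegrable (fun x : ℝ => ((fr x : ℝ) : ℂ)) volume 0 1 := by
    rw [intervalIntegrable_iff_integrableOn_Ioc_of_le h01] at hfc ⊢
    exact hfc.congr_fun (fun x hx => (heq x (Ioc_subset_Icc_self hx)).symm) measurableSet_Ioc
  have hfr_int : IntervalIntegrable fr volume 0 1 := by
    rw [intervalIntegrable_iff_integrableOn_Ioc_of_le h01] at hint ⊢
    have := hint.re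
    have h2 : Integrable (fun x => fr x) (volume.restrict (Ioc 0 1)) := by simpa using this
    exact h2
  refine ⟨hfr_int, ?_⟩
  have hval : (∫ x in (0:ℝ)..1, ((fr x : ℝ) : ℂ))
      = Complex.betaIntegral (p : ℂ) (q : ℂ) := by
    rw [Complex.betaIntegral]
    apply intervalIntegral.integral_congr
    intro x hx
    rw [uIcc_of_le h01] at hx
    exact heq x hx
  rw [intervalIntegral.integral_ofReal] at hval
  have hbeta := Complex.Gamma_mul_Gamma_eq_betaIntegral
    (show 0 < ((p:ℂ)).re by simpa using hp) (show 0 < ((q:ℂ)).re by simpa using hq)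
  have hpq : ((p:ℂ) + (q:ℂ)) = ((p + q : ℝ) : ℂ) := by push_cast; ring
  have hΓpq : Complex.Gamma ((p:ℂ) + (q:ℂ)) = ((Real.Gamma (p+q) : ℝ) : ℂ) := by
    rw [hpq, Complex.Gamma_ofReal]
  have hΓpq_ne : ((Real.Gamma (p+q) : ℝ) : ℂ) ≠ 0 := by
    simpa using (Real.Gamma_pos_of_pos (by linarith)).ne'
  have : ((∫ x in (0:ℝ)..1, fr x : ℝ) : ℂ)
      = ((Real.Gamma p * Real.Gamma q / Real.Gamma (p+q) : ℝ) : ℂ) := by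
    rw [hval]
    rw [hΓpq] at hbeta
    rw [Complex.Gamma_ofReal, Complex.Gamma_ofReal] at hbeta
    push_cast
    rw [eq_div_iff hΓpq_ne]
    linear_combination -hbeta
  exact_mod_cast this

lemma beta_Ioc {p q c d : ℝ} (hp : 0 < p) (hq : 0 < q) (hcd : c < d) :
    IntegrableOn (fun x : ℝ => (d-x) ^ (p-1) * (x-c) ^ (q-1)) (Ioc c d) ∧
    ∫ x in Ioc c d, (d-x) ^ (p-1) * (x-c) ^ (q-1)
      = Real.Gamma p * Real.Gamma q / Real.Gamma (p+q) * (d-c) ^ (p+q-1) := by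
  obtain ⟨hbi, hbv⟩ := beta01 hq hp
  set L : ℝ := d - c with hL
  have hL0 : 0 < L := by simp only [hL]; linarith
  set f : ℝ → ℝ := fun y => L * y + c with hf
  set F : ℝ → ℝ := fun x => (d-x) ^ (p-1) * (x-c) ^ (q-1) with hF
  have hfd : ∀ y ∈ Icc (0:ℝ) 1, HasDerivWithinAt f L (Icc 0 1) y := by
    intro y _
    have h := (((hasDerivAt_id y).const_mul L).add_const c).hasDerivWithinAt (s := Icc (0:ℝ) 1)
    rw [mul_one] at h
    exact h
  have hinj : InjOn f (Icc 0 1) := by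
    intro y1 _ y2 _ h
    simp only [hf] at h
    nlinarith [h, hL0]
  have himg : f '' Icc (0:ℝ) 1 = Icc c d := by
    have h5 : (fun x : ℝ => L * x + c) '' Icc 0 1 = Icc c (L + c) := by
      simpa using image_affine_Icc' hL0 c (0:ℝ) (1:ℝ)
    rw [hf, h5, show L + c = d by simp only [hL]; ring]
  have hcomp : ∀ y ∈ Icc (0:ℝ) 1,
      |L| • F (f y) = L ^ (p+q-1) * (y ^ (q-1) * (1-y) ^ (p-1)) := by
    intro y hy
    have h0 : (0:ℝ) ≤ y := hy.1
    have h1 : (0:ℝ) ≤ 1 - y := by linarith [hy.2]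
    have e1 : d - f y = L * (1 - y) := by simp only [hf, hL]; ring
    have e2 : f y - c = L * y := by simp only [hf]; ring
    rw [smul_eq_mul, abs_of_pos hL0, hF]
    simp only [e1, e2]
    rw [Real.mul_rpow hL0.le h1, Real.mul_rpow hL0.le h0]
    rw [show L * (L ^ (p-1) * (1-y) ^ (p-1) * (L ^ (q-1) * y ^ (q-1)))
        = (L ^ (1:ℝ) * L ^ (p-1) * L ^ (q-1)) * (y ^ (q-1) * (1-y) ^ (p-1)) by
      rw [Real.rpow_one]; ring]
    rw [← Real.rpow_add hL0, ← Real.rpow_add hL0]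
    ring_nf
  have hGint : IntegrableOn (fun y : ℝ => L ^ (p+q-1) * (y ^ (q-1) * (1-y) ^ (p-1)))
      (Icc (0:ℝ) 1) := by
    rw [integrableOn_Icc_iff_integrableOn_Ioc]
    exact (((intervalIntegrable_iff_integrableOn_Ioc_of_le (by norm_num)).mp
      hbi)).const_mul _
  have hiff := integrableOn_image_iff_integrableOn_abs_deriv_smul
    measurableSet_Icc hfd hinj F
  rw [himg] at hiff
  have hFicc : IntegrableOn F (Icc c d) := by
    rw [hiff]
    exact hGint.congr_fun (fun y hy => (hcomp y hy).symm ▸ rfl) measurableSet_Icc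
  constructor
  · exact hFicc.mono_set Ioc_subset_Icc_self
  · have hval := integral_image_eq_integral_abs_deriv_smul measurableSet_Icc hfd hinj F
    rw [himg] at hval
    have h2 : ∫ y in Icc (0:ℝ) 1, |L| • F (f y)
        = ∫ y in Icc (0:ℝ) 1, L ^ (p+q-1) * (y ^ (q-1) * (1-y) ^ (p-1)) :=
      setIntegral_congr_fun measurableSet_Icc hcomp
    have h3 : ∫ y in Icc (0:ℝ) 1, L ^ (p+q-1) * (y ^ (q-1) * (1-y) ^ (p-1))
        = L ^ (p+q-1) * (Real.Gamma q * Real.Gamma p / Real.Gamma (q+p)) := by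
      rw [MeasureTheory.integral_const_mul, MeasureTheory.integral_Icc_eq_integral_Ioc,
        ← intervalIntegral.integral_of_le (by norm_num : (0:ℝ) ≤ 1), hbv]
    rw [← MeasureTheory.integral_Icc_eq_integral_Ioc, hval, h2, h3]
    rw [add_comm q p]
    ring

lemma measurable_rpow_const' (c : ℝ) : Measurable fun y : ℝ => y ^ c := by
  have h : ∀ y : ℝ, y ^ c =
      if y = 0 then (if c = 0 then 1 else 0)
      else if 0 < y then Real.exp (Real.log y * c)
      else Real.exp (Real.log y * c) * Real.cos (c * Real.pi) := by
    intro y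
    rcases eq_or_ne y 0 with rfl | hy
    · simp only [if_pos rfl]
      rcases eq_or_ne c 0 with rfl | hc
      · simp [Real.rpow_zero]
      · simp [Real.zero_rpow hc, hc]
    · rw [if_neg hy]
      rcases lt_trichotomy y 0 with hneg | h0 | hpos
      · rw [if_neg (not_lt.mpr hneg.le), Real.rpow_def_of_neg hneg, mul_comm c Real.pi]
      · exact absurd h0 hy
      · rw [if_pos hpos, Real.rpow_def_of_pos hpos]
  simp only [h]
  apply Measurable.ite (measurableSet_eq) measurable_const
  apply Measurable.ite (measurableSet_lt measurable_const measurable_id)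
  · exact (Real.measurable_log.mul measurable_const).exp
  · exact ((Real.measurable_log.mul measurable_const).exp).mul measurable_const

lemma kernel_key {a b : ℝ} {Φ Φ' : ℝ → ℝ}
    (hmono : StrictMonoOn Φ (Icc a b))
    (hcont : ContinuousOn Φ (Icc a b))
    (hder : ∀ x ∈ Icc a b, HasDerivWithinAt Φ (Φ' x) (Icc a b) x)
    (hpos : ∀ x ∈ Icc a b, 0 ≤ Φ' x)
    {s t : ℝ} (hs : s ∈ Icc a b) (ht : t ∈ Icc a b) (hst : s < t)
    {p q : ℝ} (hp : 0 < p) (hq : 0 < q) :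
    IntegrableOn (fun τ => Φ' τ * ((Φ t - Φ τ) ^ (p-1) * (Φ τ - Φ s) ^ (q-1))) (Ioc s t) ∧
    ∫ τ in Ioc s t, Φ' τ * ((Φ t - Φ τ) ^ (p-1) * (Φ τ - Φ s) ^ (q-1))
      = Real.Gamma p * Real.Gamma q / Real.Gamma (p+q) * (Φ t - Φ s) ^ (p+q-1) := by
  have hsub : Icc s t ⊆ Icc a b := Icc_subset_Icc hs.1 ht.2
  have hder' : ∀ x ∈ Icc s t, HasDerivWithinAt Φ (Φ' x) (Icc s t) x := fun x hx =>
    (hder x (hsub hx)).mono hsub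
  have hinj : InjOn Φ (Icc s t) := (hmono.mono hsub).injOn
  have hmonoOn : MonotoneOn Φ (Icc s t) := (hmono.mono hsub).monotoneOn
  have himg : Φ '' Icc s t = Icc (Φ s) (Φ t) := by
    apply Subset.antisymm
    · rintro _ ⟨x, hx, rfl⟩
      exact ⟨hmonoOn (left_mem_Icc.mpr hst.le) hx hx.1,
        hmonoOn hx (right_mem_Icc.mpr hst.le) hx.2⟩
    · exact intermediate_value_Icc hst.le (hcont.mono hsub)
  set f : ℝ → ℝ := fun x => (Φ t - x) ^ (p-1) * (x - Φ s) ^ (q-1) with hf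
  have hΦst : Φ s < Φ t := hmono hs ht hst
  obtain ⟨hbi, hbv⟩ := beta_Ioc hp hq hΦst
  have h1 := integrableOn_image_iff_integrableOn_abs_deriv_smul measurableSet_Icc hder' hinj f
  have h2 := integral_image_eq_integral_abs_deriv_smul measurableSet_Icc hder' hinj f
  rw [himg] at h1 h2
  have hfIcc : IntegrableOn f (Icc (Φ s) (Φ t)) := by
    rw [integrableOn_Icc_iff_integrableOn_Ioc]; exact hbi
  have hEq : ∀ x ∈ Icc s t, |Φ' x| • f (Φ x)
      = Φ' x * ((Φ t - Φ x) ^ (p-1) * (Φ x - Φ s) ^ (q-1)) := by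
    intro x hx
    rw [smul_eq_mul, abs_of_nonneg (hpos x (hsub hx))]
  constructor
  · have h3 : IntegrableOn (fun x => |Φ' x| • f (Φ x)) (Icc s t) := h1.mp hfIcc
    have h4 : IntegrableOn (fun τ => Φ' τ * ((Φ t - Φ τ) ^ (p-1) * (Φ τ - Φ s) ^ (q-1)))
        (Icc s t) := h3.congr_fun hEq measurableSet_Icc
    exact h4.mono_set Ioc_subset_Icc_self
  · calc ∫ τ in Ioc s t, Φ' τ * ((Φ t - Φ τ) ^ (p-1) * (Φ τ - Φ s) ^ (q-1))
        = ∫ τ in Icc s t, Φ' τ * ((Φ t - Φ τ) ^ (p-1) * (Φ τ - Φ s) ^ (q-1)) :=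
          (MeasureTheory.integral_Icc_eq_integral_Ioc).symm
      _ = ∫ τ in Icc s t, |Φ' τ| • f (Φ τ) :=
          (setIntegral_congr_fun measurableSet_Icc hEq).symm
      _ = ∫ x in Icc (Φ s) (Φ t), f x := h2.symm
      _ = ∫ x in Ioc (Φ s) (Φ t), f x := MeasureTheory.integral_Icc_eq_integral_Ioc
      _ = Real.Gamma p * Real.Gamma q / Real.Gamma (p+q) * (Φ t - Φ s) ^ (p+q-1) := hbv

lemma fubini_step {a b t α β : ℝ} {Φ Φ' u₂ : ℝ → ℝ}
    (hmono : StrictMonoOn Φ (Icc a b))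
    (hcont : ContinuousOn Φ (Icc a b))
    (hder : ∀ x ∈ Icc a b, HasDerivWithinAt Φ (Φ' x) (Icc a b) x)
    (hΦm : Measurable Φ) (hΦ'm : Measurable Φ') (hum : Measurable u₂)
    (hu_nonneg : ∀ x, 0 ≤ u₂ x)
    (hΦ'_nonneg : ∀ x, 0 ≤ Φ' x)
    (hα : 0 < α) (hβ : 0 < β)
    (hat : a < t) (ht : t ∈ Icc a b)
    (hI : IntegrableOn (fun τ => Φ' τ * (Φ t - Φ τ) ^ (β + α - 1) * u₂ τ) (Ioc a t)) :
    IntegrableOn (fun τ => Φ' τ * (Φ t - Φ τ) ^ (β-1) *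
        (∫ s in Ioc a τ, Φ' s * (Φ τ - Φ s) ^ (α-1) * u₂ s)) (Ioc a t) ∧
    ∫ τ in Ioc a t, Φ' τ * (Φ t - Φ τ) ^ (β-1) *
        (∫ s in Ioc a τ, Φ' s * (Φ τ - Φ s) ^ (α-1) * u₂ s)
      = Real.Gamma β * Real.Gamma α / Real.Gamma (β+α) *
        ∫ s in Ioc a t, Φ' s * (Φ t - Φ s) ^ (β + α - 1) * u₂ s := by
  have ha : a ∈ Icc a b := ⟨le_refl a, le_trans hat.le ht.2⟩
  set μ : Measure ℝ := volume.restrict (Ioc a t) with hμ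
  set B' : ℝ := Real.Gamma β * Real.Gamma α / Real.Gamma (β+α) with hB'
  have hB'pos : 0 < B' := div_pos (mul_pos (Real.Gamma_pos_of_pos hβ)
    (Real.Gamma_pos_of_pos hα)) (Real.Gamma_pos_of_pos (by positivity))
  set S : Set (ℝ × ℝ) := {q | q.2 ∈ Ioc a q.1} with hS
  have hSm : MeasurableSet S := by
    have : S = {q : ℝ × ℝ | a < q.2} ∩ {q : ℝ × ℝ | q.2 ≤ q.1} := by
      ext q; simp [hS, Set.mem_Ioc, and_comm]
    rw [this]
    exact (measurableSet_lt measurable_const measurable_snd).inter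
      (measurableSet_le measurable_snd measurable_fst)
  set F : ℝ × ℝ → ℝ := fun z => (Φ' z.1 * (Φ t - Φ z.1) ^ (β-1)) *
    S.indicator (fun w => Φ' w.2 * (Φ w.1 - Φ w.2) ^ (α-1) * u₂ w.2) z with hF
  have hFm : Measurable F := by
    apply Measurable.mul
    · exact (hΦ'm.comp measurable_fst).mul
        ((measurable_rpow_const' (β-1)).comp (measurable_const.sub (hΦm.comp measurable_fst)))
    · apply Measurable.indicator _ hSm
      exact ((hΦ'm.comp measurable_snd).mul ((measurable_rpow_const' (α-1)).comp
        ((hΦm.comp measurable_fst).sub (hΦm.comp measurable_snd)))).mul (hum.comp measurable_snd)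
  -- a.e. s ∈ Ioc a t with s < t
  have h_ae_s : ∀ᵐ s ∂μ, s ∈ Ioc a t ∧ s < t := by
    have h1 : ∀ᵐ s ∂μ, s ∈ Ioc a t := ae_restrict_mem measurableSet_Ioc
    have h2 : ∀ᵐ s ∂μ, s ≠ t := by
      rw [ae_iff]
      have : {s | ¬ s ≠ t} = {t} := by ext s; simp
      rw [this, hμ, Measure.restrict_apply (measurableSet_singleton t)]
      exact measure_mono_null (inter_subset_left) (Real.volume_singleton)
    filter_upwards [h1, h2] with s hs hne
    exact ⟨hs, lt_of_le_of_ne hs.2 hne⟩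
  -- pointwise identification of F (·, s) as an indicator, for fixed s with a < s
  have hFs : ∀ s : ℝ, a < s → ∀ τ : ℝ, F (τ, s) =
      (Ici s).indicator (fun τ' => (Φ' τ' * ((Φ t - Φ τ') ^ (β-1) * (Φ τ' - Φ s) ^ (α-1))) *
        (Φ' s * u₂ s)) τ := by
    intro s hs τ
    by_cases hsτ : s ≤ τ
    · have h1 : (τ, s) ∈ S := by simp [hS, Set.mem_Ioc, hs, hsτ]
      have h2 : τ ∈ Ici s := hsτ
      rw [Set.indicator_of_mem h2, hF]
      simp only [Set.indicator_of_mem h1]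
      ring
    · have h1 : (τ, s) ∉ S := by simp [hS, Set.mem_Ioc, hsτ]
      have h2 : τ ∉ Ici s := hsτ
      rw [Set.indicator_of_notMem h2, hF]
      simp only [Set.indicator_of_notMem h1]
      ring
  -- the inner τ-integral, computed for each s ∈ Ioc a t with s < t
  have h_inner : ∀ s : ℝ, s ∈ Ioc a t → s < t →
      ∫ τ, F (τ, s) ∂μ = B' * (Φ' s * (Φ t - Φ s) ^ (β + α - 1) * u₂ s) := by
    intro s hs hst
    have hsab : s ∈ Icc a b := ⟨hs.1.le, le_trans hs.2 ht.2⟩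
    obtain ⟨hki, hkv⟩ := kernel_key hmono hcont hder
      (fun x hx => hΦ'_nonneg x) hsab ht hst hβ hα
    have e0 : (fun τ => F (τ, s)) = (Ici s).indicator
        (fun τ' => (Φ' τ' * ((Φ t - Φ τ') ^ (β-1) * (Φ τ' - Φ s) ^ (α-1))) *
          (Φ' s * u₂ s)) := funext (hFs s hs.1)
    rw [e0, integral_indicator measurableSet_Ici, hμ,
      Measure.restrict_restrict measurableSet_Ici]
    have e1 : Ici s ∩ Ioc a t = Icc s t := by
      ext τ; simp only [mem_inter_iff, mem_Ici, mem_Ioc, mem_Icc]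
      constructor
      · rintro ⟨h1, _, h3⟩; exact ⟨h1, h3⟩
      · rintro ⟨h1, h2⟩; exact ⟨h1, lt_of_lt_of_le hs.1 h1, h2⟩
    rw [e1, setIntegral_congr_set Ioc_ae_eq_Icc.symm,
      MeasureTheory.integral_mul_const, hkv]
    ring
  -- product integrability
  have hFint : Integrable F (μ.prod μ) := by
    refine ⟨hFm.aestronglyMeasurable, ?_⟩
    rw [hasFiniteIntegral_def, MeasureTheory.lintegral_prod_symm _ hFm.enorm.aemeasurable]
    have hbound : ∀ᵐ s ∂μ, (∫⁻ τ, ‖F (τ, s)‖ₑ ∂μ)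
        = ENNReal.ofReal (B' * (Φ' s * (Φ t - Φ s) ^ (β + α - 1) * u₂ s)) := by
      filter_upwards [h_ae_s] with s hs
      obtain ⟨hs1, hs2⟩ := hs
      have hsab : s ∈ Icc a b := ⟨hs1.1.le, le_trans hs1.2 ht.2⟩
      obtain ⟨hki, hkv⟩ := kernel_key hmono hcont hder
        (fun x hx => hΦ'_nonneg x) hsab ht hs2 hβ hα
      set G : ℝ → ℝ := fun τ' => (Φ' τ' * ((Φ t - Φ τ') ^ (β-1) * (Φ τ' - Φ s) ^ (α-1))) *
        (Φ' s * u₂ s) with hG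
      have e0 : ∀ τ, ‖F (τ, s)‖ₑ
          = (Ici s).indicator (fun τ' => ‖G τ'‖ₑ) τ := by
        intro τ
        rw [hFs s hs1.1 τ]
        by_cases h : τ ∈ Ici s
        · rw [Set.indicator_of_mem h, Set.indicator_of_mem h]
        · rw [Set.indicator_of_notMem h, Set.indicator_of_notMem h]; simp
      rw [lintegral_congr e0, lintegral_indicator measurableSet_Ici, hμ,
        Measure.restrict_restrict measurableSet_Ici]
      have e1 : Ici s ∩ Ioc a t = Icc s t := by
        ext τ; simp only [mem_inter_iff, mem_Ici, mem_Ioc, mem_Icc]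
        constructor
        · rintro ⟨h1, _, h3⟩; exact ⟨h1, h3⟩
        · rintro ⟨h1, h2⟩; exact ⟨h1, lt_of_lt_of_le hs1.1 h1, h2⟩
      rw [e1, Measure.restrict_congr_set Ioc_ae_eq_Icc.symm]
      have hGnn : 0 ≤ᵐ[volume.restrict (Ioc s t)] G := by
        filter_upwards [ae_restrict_mem measurableSet_Ioc] with τ hτ
        have hτab : τ ∈ Icc a b := ⟨le_trans hs1.1.le hτ.1.le, le_trans hτ.2 ht.2⟩
        have h1 : 0 ≤ Φ t - Φ τ := sub_nonneg.mpr
          ((hmono.monotoneOn) hτab ht hτ.2)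
        have h2 : 0 ≤ Φ τ - Φ s := sub_nonneg.mpr
          ((hmono.monotoneOn) hsab hτab hτ.1.le)
        have := Real.rpow_nonneg h1 (β-1)
        have := Real.rpow_nonneg h2 (α-1)
        have := hΦ'_nonneg τ
        have := hΦ'_nonneg s
        have := hu_nonneg s
        positivity
      have hGint : Integrable G (volume.restrict (Ioc s t)) := hki.mul_const _
      have e2 : ∫⁻ τ, ‖G τ‖ₑ ∂(volume.restrict (Ioc s t))
          = ENNReal.ofReal (∫ τ, G τ ∂(volume.restrict (Ioc s t))) := by
        rw [MeasureTheory.ofReal_integral_eq_lintegral_ofReal hGint hGnn]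
        apply lintegral_congr_ae
        filter_upwards [hGnn] with τ hτ
        rw [← Real.enorm_eq_ofReal hτ]
      rw [e2, hG]
      rw [MeasureTheory.integral_mul_const, hkv]
      congr 1
      ring
    rw [lintegral_congr_ae hbound]
    have hIm : AEMeasurable (fun s => ENNReal.ofReal
        (B' * (Φ' s * (Φ t - Φ s) ^ (β + α - 1) * u₂ s))) μ := by
      apply ENNReal.measurable_ofReal.comp_aemeasurable
      apply Measurable.aemeasurable
      exact measurable_const.mul ((hΦ'm.mul ((measurable_rpow_const' (β+α-1)).comp
        (measurable_const.sub hΦm))).mul hum)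
    have e3 : ∀ᵐ s ∂μ, ENNReal.ofReal (B' * (Φ' s * (Φ t - Φ s) ^ (β + α - 1) * u₂ s))
        = ENNReal.ofReal B' * ENNReal.ofReal (Φ' s * (Φ t - Φ s) ^ (β + α - 1) * u₂ s) := by
      refine Eventually.of_forall fun s => ?_
      rw [← ENNReal.ofReal_mul hB'pos.le]
    rw [lintegral_congr_ae e3, lintegral_const_mul' _ _ ENNReal.ofReal_ne_top]
    have hnn : 0 ≤ᵐ[μ] fun s => Φ' s * (Φ t - Φ s) ^ (β + α - 1) * u₂ s := by
      filter_upwards [ae_restrict_mem measurableSet_Ioc] with s hs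
      have hsab : s ∈ Icc a b := ⟨hs.1.le, le_trans hs.2 ht.2⟩
      have h1 : 0 ≤ Φ t - Φ s := sub_nonneg.mpr ((hmono.monotoneOn) hsab ht hs.2)
      have := Real.rpow_nonneg h1 (β+α-1)
      have := hΦ'_nonneg s
      have := hu_nonneg s
      positivity
    have e4 : ∫⁻ s, ENNReal.ofReal (Φ' s * (Φ t - Φ s) ^ (β + α - 1) * u₂ s) ∂μ
        = ENNReal.ofReal (∫ s, Φ' s * (Φ t - Φ s) ^ (β + α - 1) * u₂ s ∂μ) :=
      (MeasureTheory.ofReal_integral_eq_lintegral_ofReal hI hnn).symm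
    rw [e4]
    exact ENNReal.mul_lt_top ENNReal.ofReal_lt_top ENNReal.ofReal_lt_top
  -- identify the τ-section integral
  have claim2 : ∀ᵐ τ ∂μ, (∫ s, F (τ, s) ∂μ)
      = Φ' τ * (Φ t - Φ τ) ^ (β-1) * (∫ s in Ioc a τ, Φ' s * (Φ τ - Φ s) ^ (α-1) * u₂ s) := by
    filter_upwards [ae_restrict_mem measurableSet_Ioc] with τ hτ
    have e0 : ∀ s, F (τ, s) = (Φ' τ * (Φ t - Φ τ) ^ (β-1)) *
        (Ioc a τ).indicator (fun s => Φ' s * (Φ τ - Φ s) ^ (α-1) * u₂ s) s := by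
      intro s
      rw [hF]
      congr 1
    simp_rw [e0]
    rw [MeasureTheory.integral_const_mul, integral_indicator measurableSet_Ioc, hμ,
      Measure.restrict_restrict measurableSet_Ioc,
      inter_eq_left.mpr (Ioc_subset_Ioc_right hτ.2)]
  have hA : IntegrableOn (fun τ => Φ' τ * (Φ t - Φ τ) ^ (β-1) *
      (∫ s in Ioc a τ, Φ' s * (Φ τ - Φ s) ^ (α-1) * u₂ s)) (Ioc a t) := by
    have := hFint.integral_prod_left
    exact (this.congr claim2 : _)
  refine ⟨hA, ?_⟩
  have hswap : ∫ τ, (∫ s, F (τ, s) ∂μ) ∂μ = ∫ s, (∫ τ, F (τ, s) ∂μ) ∂μ := by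
    have h := MeasureTheory.integral_integral_swap (f := fun τ s => F (τ, s))
      (μ := μ) (ν := μ) (by exact hFint)
    exact h
  calc ∫ τ in Ioc a t, Φ' τ * (Φ t - Φ τ) ^ (β-1) *
        (∫ s in Ioc a τ, Φ' s * (Φ τ - Φ s) ^ (α-1) * u₂ s)
      = ∫ τ, (∫ s, F (τ, s) ∂μ) ∂μ := (integral_congr_ae claim2).symm
    _ = ∫ s, (∫ τ, F (τ, s) ∂μ) ∂μ := hswap
    _ = ∫ s, B' * (Φ' s * (Φ t - Φ s) ^ (β + α - 1) * u₂ s) ∂μ := by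
        apply integral_congr_ae
        filter_upwards [h_ae_s] with s hs
        exact h_inner s hs.1 hs.2
    _ = B' * ∫ s in Ioc a t, Φ' s * (Φ t - Φ s) ^ (β + α - 1) * u₂ s :=
        MeasureTheory.integral_const_mul _ _

/-- Mittag-Leffler form of the ψ-Gronwall inequality: if moreover `v` is nondecreasing, then
`u(t) ≤ v(t) E_α(g(t) Γ(α) (ψ(t)-ψ(a))^α)`, where `E_α(z) = ∑_{k≥0} z^k/Γ(αk+1)`. -/
theorem psi_gronwall_mittagLeffler
    (a b α : ℝ) (hab : a < b) (hα : 0 < α)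
    (u v g ψ ψ' : ℝ → ℝ)
    (hu_nonneg : ∀ t ∈ Icc a b, 0 ≤ u t)
    (hv_nonneg : ∀ t ∈ Icc a b, 0 ≤ v t)
    (hu_int : IntegrableOn u (Icc a b))
    (hv_int : IntegrableOn v (Icc a b))
    (hg_cont : ContinuousOn g (Icc a b))
    (hg_nonneg : ∀ t ∈ Icc a b, 0 ≤ g t)
    (hg_mono : MonotoneOn g (Icc a b))
    (hψ : ∀ t ∈ Icc a b, HasDerivAt ψ (ψ' t) t)
    (hψ'_cont : ContinuousOn ψ' (Icc a b))
    (hψ'_pos : ∀ t ∈ Icc a b, 0 < ψ' t)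
    (hv_mono : MonotoneOn v (Icc a b))
    (hineq : ∀ t ∈ Icc a b,
      u t ≤ v t + g t * ∫ τ in a..t, ψ' τ * (ψ t - ψ τ) ^ (α - 1) * u τ) :
    ∀ t ∈ Icc a b,
      u t ≤ v t * ∑' k : ℕ,
        (g t * Real.Gamma α * (ψ t - ψ a) ^ α) ^ k / Real.Gamma (α * (k : ℝ) + 1) := by
  have hab' : a ≤ b := hab.le
  have haI : a ∈ Icc a b := ⟨le_refl a, hab'⟩
  have hψcont : ContinuousOn ψ (Icc a b) := fun x hx =>
    ((hψ x hx).continuousAt).continuousWithinAt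
  -- clamp to [a,b]
  set π : ℝ → ℝ := fun x => max a (min b x) with hπdef
  have hπ_mem : ∀ x, π x ∈ Icc a b := by
    intro x
    constructor
    · exact le_max_left _ _
    · exact max_le hab' (min_le_left _ _)
  have hπ_id : ∀ x ∈ Icc a b, π x = x := by
    intro x hx
    simp only [hπdef]
    rw [min_eq_right hx.2, max_eq_right hx.1]
  have hπ_cont : Continuous π := continuous_const.max (continuous_const.min continuous_id)
  set Φ : ℝ → ℝ := fun x => ψ (π x) with hΦdef
  set Φ' : ℝ → ℝ := fun x => ψ' (π x) with hΦ'def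
  have hΦeq : ∀ x ∈ Icc a b, Φ x = ψ x := by
    intro x hx; simp only [hΦdef]; rw [hπ_id x hx]
  have hΦ'eq : ∀ x ∈ Icc a b, Φ' x = ψ' x := by
    intro x hx; simp only [hΦ'def]; rw [hπ_id x hx]
  have hΦcont : Continuous Φ := hψcont.comp_continuous hπ_cont hπ_mem
  have hΦ'cont : Continuous Φ' := hψ'_cont.comp_continuous hπ_cont hπ_mem
  have hΦm : Measurable Φ := hΦcont.measurable
  have hΦ'm : Measurable Φ' := hΦ'cont.measurable
  have hΦ'pos : ∀ x, 0 < Φ' x := fun x => hψ'_pos _ (hπ_mem x)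
  have hΦ'nonneg : ∀ x, 0 ≤ Φ' x := fun x => (hΦ'pos x).le
  have hψmono : StrictMonoOn ψ (Icc a b) := by
    apply strictMonoOn_of_deriv_pos (convex_Icc a b) hψcont
    intro x hx
    rw [interior_Icc] at hx
    rw [(hψ x (Ioo_subset_Icc_self hx)).deriv]
    exact hψ'_pos x (Ioo_subset_Icc_self hx)
  have hΦmono : StrictMonoOn Φ (Icc a b) := by
    intro x hx y hy hxy
    rw [hΦeq x hx, hΦeq y hy]
    exact hψmono hx hy hxy
  have hΦmonoOn : MonotoneOn Φ (Icc a b) := hΦmono.monotoneOn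
  have hΦcontOn : ContinuousOn Φ (Icc a b) := hΦcont.continuousOn
  have hΦder : ∀ x ∈ Icc a b, HasDerivWithinAt Φ (Φ' x) (Icc a b) x := by
    intro x hx
    have h1 : HasDerivWithinAt ψ (ψ' x) (Icc a b) x := (hψ x hx).hasDerivWithinAt
    have h2 := h1.congr (fun y hy => hΦeq y hy) (hΦeq x hx)
    rw [hΦ'eq x hx]
    exact h2
  -- measurable modification of u
  have hum := hu_int.aestronglyMeasurable
  have hae : u =ᵐ[volume.restrict (Icc a b)] hum.mk u := hum.ae_eq_mk
  have hnull : volume ({x | u x ≠ hum.mk u x} ∩ Icc a b) = 0 := by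
    have h0 := ae_iff.mp hae
    rwa [Measure.restrict_apply' measurableSet_Icc] at h0
  set N : Set ℝ := toMeasurable volume ({x | u x ≠ hum.mk u x} ∩ Icc a b) with hNdef
  have hNm : MeasurableSet N := measurableSet_toMeasurable _ _
  have hNnull : volume N = 0 := by rw [hNdef, measure_toMeasurable]; exact hnull
  set u₂ : ℝ → ℝ := (Nᶜ).indicator (fun x => max (hum.mk u x) 0) with hu₂def
  have hu₂m : Measurable u₂ :=
    (hum.stronglyMeasurable_mk.measurable.max measurable_const).indicator hNm.compl
  have hu₂nonneg : ∀ x, 0 ≤ u₂ x := by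
    intro x
    rw [hu₂def]
    exact Set.indicator_nonneg (fun y _ => le_max_right _ _) x
  have hu₂le : ∀ x ∈ Icc a b, u₂ x ≤ u x := by
    intro x hx
    rw [hu₂def]
    by_cases hxN : x ∈ N
    · rw [Set.indicator_of_notMem (by simpa using hxN)]
      exact hu_nonneg x hx
    · rw [Set.indicator_of_mem (by simpa using hxN)]
      have hux : u x = hum.mk u x := by
        by_contra hne
        exact hxN (subset_toMeasurable _ _ ⟨hne, hx⟩)
      rw [← hux, max_eq_left (hu_nonneg x hx)]
  have hu₂ae : u₂ =ᵐ[volume.restrict (Icc a b)] u := by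
    have h1 : ∀ᵐ x ∂(volume.restrict (Icc a b)), x ∉ N := by
      rw [ae_iff]
      have h2 : {x | ¬ x ∉ N} = N := by ext x; simp
      rw [h2, Measure.restrict_apply hNm]
      exact measure_mono_null inter_subset_left hNnull
    filter_upwards [h1, ae_restrict_mem measurableSet_Icc] with x hxN hxI
    rw [hu₂def, Set.indicator_of_mem (by simpa using hxN)]
    have hux : u x = hum.mk u x := by
      by_contra hne
      exact hxN (subset_toMeasurable _ _ ⟨hne, hxI⟩)
    rw [← hux, max_eq_left (hu_nonneg x hxI)]
  have hu₂int : IntegrableOn u₂ (Icc a b) := hu_int.congr hu₂ae.symm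
  have hu₂ae' : ∀ r ∈ Icc a b, u₂ =ᵐ[volume.restrict (Ioc a r)] u := by
    intro r hr
    exact ae_restrict_of_ae_restrict_of_subset
      (Ioc_subset_Icc_self.trans (Icc_subset_Icc_right hr.2)) hu₂ae
  -- converted inequality
  have hineq2 : ∀ r ∈ Icc a b,
      u r ≤ v r + g r * ∫ τ in Ioc a r, Φ' τ * (Φ r - Φ τ) ^ (α-1) * u₂ τ := by
    intro r hr
    have hsub : Ioc a r ⊆ Icc a b := fun x hx => ⟨hx.1.le, le_trans hx.2 hr.2⟩
    have haeq : (fun τ => ψ' τ * (ψ r - ψ τ) ^ (α-1) * u τ) =ᵐ[volume.restrict (Ioc a r)]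
        (fun τ => Φ' τ * (Φ r - Φ τ) ^ (α-1) * u₂ τ) := by
      filter_upwards [hu₂ae' r hr, ae_restrict_mem measurableSet_Ioc] with τ h2 hτ
      rw [h2, hΦeq r hr, hΦeq τ (hsub hτ), hΦ'eq τ (hsub hτ)]
    by_cases hcase : IntervalIntegrable (fun τ => ψ' τ * (ψ r - ψ τ) ^ (α-1) * u τ) volume a r
    · have hval : (∫ τ in a..r, ψ' τ * (ψ r - ψ τ) ^ (α-1) * u τ)
          = ∫ τ in Ioc a r, Φ' τ * (Φ r - Φ τ) ^ (α-1) * u₂ τ := by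
        rw [intervalIntegral.integral_of_le hr.1]
        exact integral_congr_ae haeq
      rw [← hval]
      exact hineq r hr
    · have h0 : (∫ τ in a..r, ψ' τ * (ψ r - ψ τ) ^ (α-1) * u τ) = 0 :=
        intervalIntegral.integral_undef hcase
      have h1 : ¬ IntegrableOn (fun τ => Φ' τ * (Φ r - Φ τ) ^ (α-1) * u₂ τ) (Ioc a r) := by
        intro hc
        apply hcase
        rw [intervalIntegrable_iff_integrableOn_Ioc_of_le hr.1]
        exact hc.congr haeq.symm
      have h2 : (∫ τ in Ioc a r, Φ' τ * (Φ r - Φ τ) ^ (α-1) * u₂ τ) = 0 := integral_undef h1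
      rw [h2]
      have h3 := hineq r hr
      rw [h0] at h3
      simpa using h3
  -- now fix t
  intro t ht
  rw [← hΦeq t ht, ← hΦeq a haI]
  set x₀ : ℝ := g t * Real.Gamma α * (Φ t - Φ a) ^ α with hx₀def
  have hΦta : 0 ≤ Φ t - Φ a := sub_nonneg.mpr (hΦmonoOn haI ht ht.1)
  have hx₀ : 0 ≤ x₀ :=
    mul_nonneg (mul_nonneg (hg_nonneg t ht) (Real.Gamma_pos_of_pos hα).le)
      (Real.rpow_nonneg hΦta α)
  have hsum : Summable (fun k : ℕ => x₀ ^ k / Real.Gamma (α * k + 1)) :=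
    aux_summable hα one_pos hx₀
  have hT1 : 1 ≤ ∑' k : ℕ, x₀ ^ k / Real.Gamma (α * k + 1) := by
    have h0 : x₀ ^ 0 / Real.Gamma (α * (0:ℕ) + 1) = 1 := by
      simp [Real.Gamma_one]
    have h1 := Summable.le_tsum hsum 0 (fun k _ => by
      have := Real.Gamma_pos_of_pos (show (0:ℝ) < α * k + 1 by positivity)
      positivity)
    rw [h0] at h1
    exact h1
  have hvT : v t ≤ v t * ∑' k : ℕ, x₀ ^ k / Real.Gamma (α * k + 1) := by
    nlinarith [hv_nonneg t ht, hT1]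
  rcases eq_or_lt_of_le ht.1 with hta | hat
  · -- t = a
    subst hta
    have h0 := hineq2 a haI
    simp only [Ioc_self, Measure.restrict_empty, integral_zero_measure, mul_zero,
      add_zero] at h0
    exact h0.trans hvT
  by_cases hI1 : IntegrableOn (fun τ => Φ' τ * (Φ t - Φ τ) ^ (α-1) * u₂ τ) (Ioc a t)
  swap
  · have h2 : (∫ τ in Ioc a t, Φ' τ * (Φ t - Φ τ) ^ (α-1) * u₂ τ) = 0 := integral_undef hI1
    have h3 := hineq2 t ht
    rw [h2, mul_zero, add_zero] at h3
    exact h3.trans hvT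
  -- main case
  have hΦat : Φ a < Φ t := hΦmono haI ht hat
  have hΦta_pos : 0 < Φ t - Φ a := sub_pos.mpr hΦat
  have hΓα_pos := Real.Gamma_pos_of_pos hα
  -- domination
  have dom : ∀ β γ : ℝ, 0 < β → β ≤ γ →
      IntegrableOn (fun τ => Φ' τ * (Φ t - Φ τ) ^ (β-1) * u₂ τ) (Ioc a t) →
      IntegrableOn (fun τ => Φ' τ * (Φ t - Φ τ) ^ (γ-1) * u₂ τ) (Ioc a t) := by
    intro β γ hβ0 hβγ hint
    have hae_t : ∀ᵐ τ ∂(volume.restrict (Ioc a t)), τ ∈ Ioc a t ∧ τ < t := by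
      have h1 : ∀ᵐ τ ∂(volume.restrict (Ioc a t)), τ ∈ Ioc a t :=
        ae_restrict_mem measurableSet_Ioc
      have h2 : ∀ᵐ τ ∂(volume.restrict (Ioc a t)), τ ≠ t := by
        rw [ae_iff]
        have h3 : {τ | ¬ τ ≠ t} = {t} := by ext τ; simp
        rw [h3, Measure.restrict_apply (measurableSet_singleton t)]
        exact measure_mono_null inter_subset_left Real.volume_singleton
      filter_upwards [h1, h2] with τ hτ hne
      exact ⟨hτ, lt_of_le_of_ne hτ.2 hne⟩
    apply Integrable.mono'
      (g := fun τ => (Φ t - Φ a) ^ (γ-β) * (Φ' τ * (Φ t - Φ τ) ^ (β-1) * u₂ τ))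
      (hint.const_mul _)
    · exact ((hΦ'm.mul ((measurable_rpow_const' (γ-1)).comp
        (measurable_const.sub hΦm))).mul hu₂m).aestronglyMeasurable
    · filter_upwards [hae_t] with τ hτp
      obtain ⟨hτ, hτt⟩ := hτp
      have hτab : τ ∈ Icc a b := ⟨hτ.1.le, hτ.2.trans ht.2⟩
      have h1 : 0 < Φ t - Φ τ := sub_pos.mpr (hΦmono hτab ht hτt)
      have h2 : Φ t - Φ τ ≤ Φ t - Φ a := by
        have := hΦmonoOn haI hτab hτ.1.le
        linarith
      have h3 : (Φ t - Φ τ) ^ (γ-1) ≤ (Φ t - Φ τ) ^ (β-1) * (Φ t - Φ a) ^ (γ-β) := by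
        rw [show γ - 1 = (β-1) + (γ-β) by ring, Real.rpow_add h1]
        exact mul_le_mul_of_nonneg_left
          (Real.rpow_le_rpow h1.le h2 (by linarith)) (Real.rpow_nonneg h1.le _)
      have h4 : 0 ≤ (Φ t - Φ τ) ^ (γ-1) := Real.rpow_nonneg h1.le _
      have h5 := hΦ'nonneg τ
      have h6 := hu₂nonneg τ
      rw [Real.norm_eq_abs, abs_of_nonneg (by positivity)]
      calc Φ' τ * (Φ t - Φ τ) ^ (γ-1) * u₂ τ
          ≤ Φ' τ * ((Φ t - Φ τ) ^ (β-1) * (Φ t - Φ a) ^ (γ-β)) * u₂ τ := by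
            apply mul_le_mul_of_nonneg_right (mul_le_mul_of_nonneg_left h3 h5) h6
        _ = (Φ t - Φ a) ^ (γ-β) * (Φ' τ * (Φ t - Φ τ) ^ (β-1) * u₂ τ) := by ring
  have hIn : ∀ n : ℕ, 1 ≤ n →
      IntegrableOn (fun τ => Φ' τ * (Φ t - Φ τ) ^ (α * n - 1) * u₂ τ) (Ioc a t) := by
    intro n hn
    have hn' : (1:ℝ) ≤ (n:ℝ) := by exact_mod_cast hn
    apply dom α (α * n) hα (by nlinarith) hI1
  -- main induction
  have main : ∀ n : ℕ, 1 ≤ n →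
      u t ≤ v t * (∑ k ∈ Finset.range n, x₀ ^ k / Real.Gamma (α * k + 1))
        + (g t) ^ n * (Real.Gamma α) ^ n / Real.Gamma (α * n) *
          ∫ τ in Ioc a t, Φ' τ * (Φ t - Φ τ) ^ (α * n - 1) * u₂ τ := by
    intro n hn
    induction n, hn using Nat.le_induction with
    | base =>
      have h := hineq2 t ht
      have e : α * ((1:ℕ):ℝ) - 1 = α - 1 := by push_cast; ring
      simp only [Finset.sum_range_one, pow_zero, Nat.cast_zero, mul_zero, zero_add,
        Real.Gamma_one, Nat.cast_one, mul_one, pow_one, e]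
      rw [div_one, mul_one]
      have e2 : g t * Real.Gamma α / Real.Gamma α = g t := by
        field_simp
      rw [e2]
      exact h
    | succ n hn1 ih =>
      have hn' : (1:ℝ) ≤ (n:ℝ) := by exact_mod_cast hn1
      have hαn : 0 < α * (n:ℝ) := by nlinarith
      have hΓαn := Real.Gamma_pos_of_pos hαn
      have hΓαnα := Real.Gamma_pos_of_pos (show (0:ℝ) < α * n + α by nlinarith)
      -- normalize casts in the goal
      simp only [show ((n+1:ℕ):ℝ) = (n:ℝ)+1 from by push_cast; ring,
        show α * ((n:ℝ)+1) - 1 = α * (n:ℝ) + α - 1 from by ring,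
        show α * ((n:ℝ)+1) = α * (n:ℝ) + α from by ring]
      have In1 := hIn (n+1) (by omega)
      have In1' : IntegrableOn
          (fun τ => Φ' τ * (Φ t - Φ τ) ^ (α * (n:ℝ) + α - 1) * u₂ τ) (Ioc a t) := by
        have ecast : α * (((n+1:ℕ)):ℝ) - 1 = α * (n:ℝ) + α - 1 := by push_cast; ring
        rw [← ecast]
        exact In1
      obtain ⟨hFa, hFb⟩ := fubini_step hΦmono hΦcontOn hΦder hΦm hΦ'm hu₂m
        hu₂nonneg hΦ'nonneg hα hαn hat ht In1'
      obtain ⟨hk1, hk1v⟩ := kernel_key hΦmono hΦcontOn hΦder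
        (fun x _ => hΦ'nonneg x) haI ht hat hαn one_pos
      simp only [sub_self, Real.rpow_zero, mul_one, Real.Gamma_one,
        add_sub_cancel_right] at hk1 hk1v
      -- pointwise bound inside the remainder integral
      have hptwise : ∀ᵐ τ ∂(volume.restrict (Ioc a t)),
          Φ' τ * (Φ t - Φ τ) ^ (α * (n:ℝ) - 1) * u₂ τ ≤
          Φ' τ * (Φ t - Φ τ) ^ (α * (n:ℝ) - 1) *
            (v t + g t * ∫ s in Ioc a τ, Φ' s * (Φ τ - Φ s) ^ (α-1) * u₂ s) := by
        filter_upwards [ae_restrict_mem measurableSet_Ioc] with τ hτ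
        have hτab : τ ∈ Icc a b := ⟨hτ.1.le, hτ.2.trans ht.2⟩
        have hbase : 0 ≤ Φ t - Φ τ := sub_nonneg.mpr (hΦmonoOn hτab ht hτ.2)
        have hkern : 0 ≤ Φ' τ * (Φ t - Φ τ) ^ (α * (n:ℝ) - 1) :=
          mul_nonneg (hΦ'nonneg τ) (Real.rpow_nonneg hbase _)
        have h1 : u₂ τ ≤ u τ := hu₂le τ hτab
        have h2 := hineq2 τ hτab
        have h3 : v τ ≤ v t := hv_mono hτab ht hτ.2
        have h4 : g τ ≤ g t := hg_mono hτab ht hτ.2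
        have h5 : 0 ≤ ∫ s in Ioc a τ, Φ' s * (Φ τ - Φ s) ^ (α-1) * u₂ s := by
          apply setIntegral_nonneg measurableSet_Ioc
          intro s hs
          have hsab : s ∈ Icc a b := ⟨hs.1.le, le_trans hs.2 hτab.2⟩
          have : 0 ≤ Φ τ - Φ s := sub_nonneg.mpr (hΦmonoOn hsab hτab hs.2)
          exact mul_nonneg (mul_nonneg (hΦ'nonneg s) (Real.rpow_nonneg this _))
            (hu₂nonneg s)
        have h6 : g τ * (∫ s in Ioc a τ, Φ' s * (Φ τ - Φ s) ^ (α-1) * u₂ s)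
            ≤ g t * (∫ s in Ioc a τ, Φ' s * (Φ τ - Φ s) ^ (α-1) * u₂ s) :=
          mul_le_mul_of_nonneg_right h4 h5
        have hbound : u₂ τ ≤ v t + g t * ∫ s in Ioc a τ, Φ' s * (Φ τ - Φ s) ^ (α-1) * u₂ s := by
          linarith
        exact mul_le_mul_of_nonneg_left hbound hkern
      have hsplit : ∀ τ : ℝ, Φ' τ * (Φ t - Φ τ) ^ (α * (n:ℝ) - 1) *
            (v t + g t * ∫ s in Ioc a τ, Φ' s * (Φ τ - Φ s) ^ (α-1) * u₂ s)
          = v t * (Φ' τ * (Φ t - Φ τ) ^ (α * (n:ℝ) - 1))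
            + g t * (Φ' τ * (Φ t - Φ τ) ^ (α * (n:ℝ) - 1) *
              ∫ s in Ioc a τ, Φ' s * (Φ τ - Φ s) ^ (α-1) * u₂ s) := by
        intro τ; ring
      have hmulint : IntegrableOn (fun τ => Φ' τ * (Φ t - Φ τ) ^ (α * (n:ℝ) - 1) *
          (v t + g t * ∫ s in Ioc a τ, Φ' s * (Φ τ - Φ s) ^ (α-1) * u₂ s)) (Ioc a t) := by
        simp only [hsplit]
        exact (hk1.const_mul (v t)).add (hFa.const_mul (g t))
      have hJle : (∫ τ in Ioc a t, Φ' τ * (Φ t - Φ τ) ^ (α * (n:ℝ) - 1) * u₂ τ)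
          ≤ v t * (Real.Gamma (α * n) / Real.Gamma (α * n + 1) * (Φ t - Φ a) ^ (α * (n:ℝ)))
            + g t * (Real.Gamma (α * n) * Real.Gamma α / Real.Gamma (α * n + α) *
              ∫ s in Ioc a t, Φ' s * (Φ t - Φ s) ^ (α * (n:ℝ) + α - 1) * u₂ s) := by
        calc (∫ τ in Ioc a t, Φ' τ * (Φ t - Φ τ) ^ (α * (n:ℝ) - 1) * u₂ τ)
            ≤ ∫ τ in Ioc a t, Φ' τ * (Φ t - Φ τ) ^ (α * (n:ℝ) - 1) *
                (v t + g t * ∫ s in Ioc a τ, Φ' s * (Φ τ - Φ s) ^ (α-1) * u₂ s) :=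
              integral_mono_ae (hIn n hn1) hmulint hptwise
          _ = v t * (∫ τ in Ioc a t, Φ' τ * (Φ t - Φ τ) ^ (α * (n:ℝ) - 1))
              + g t * (∫ τ in Ioc a t, Φ' τ * (Φ t - Φ τ) ^ (α * (n:ℝ) - 1) *
                ∫ s in Ioc a τ, Φ' s * (Φ τ - Φ s) ^ (α-1) * u₂ s) := by
              simp only [hsplit]
              rw [integral_add ((hk1.const_mul (v t))) ((hFa.const_mul (g t))),
                MeasureTheory.integral_const_mul, MeasureTheory.integral_const_mul]
          _ = _ := by rw [hk1v, hFb]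
      have hx₀n : x₀ ^ n = (g t) ^ n * (Real.Gamma α) ^ n * (Φ t - Φ a) ^ (α * (n:ℝ)) := by
        rw [hx₀def, mul_pow, mul_pow]
        congr 1
        rw [← Real.rpow_natCast ((Φ t - Φ a) ^ α) n, ← Real.rpow_mul hΦta]
      have hCn : (0:ℝ) ≤ (g t) ^ n * (Real.Gamma α) ^ n / Real.Gamma (α * n) := by
        have := hg_nonneg t ht
        positivity
      calc u t ≤ v t * (∑ k ∈ Finset.range n, x₀ ^ k / Real.Gamma (α * k + 1))
            + (g t) ^ n * (Real.Gamma α) ^ n / Real.Gamma (α * n) *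
              ∫ τ in Ioc a t, Φ' τ * (Φ t - Φ τ) ^ (α * n - 1) * u₂ τ := ih
        _ ≤ v t * (∑ k ∈ Finset.range n, x₀ ^ k / Real.Gamma (α * k + 1))
            + (g t) ^ n * (Real.Gamma α) ^ n / Real.Gamma (α * n) *
              (v t * (Real.Gamma (α * n) / Real.Gamma (α * n + 1) * (Φ t - Φ a) ^ (α * (n:ℝ)))
                + g t * (Real.Gamma (α * n) * Real.Gamma α / Real.Gamma (α * n + α) *
                  ∫ s in Ioc a t, Φ' s * (Φ t - Φ s) ^ (α * (n:ℝ) + α - 1) * u₂ s)) := by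
            exact add_le_add (le_refl _) (mul_le_mul_of_nonneg_left hJle hCn)
        _ = v t * (∑ k ∈ Finset.range (n+1), x₀ ^ k / Real.Gamma (α * k + 1))
            + (g t) ^ (n+1) * (Real.Gamma α) ^ (n+1) / Real.Gamma (α * (n:ℝ) + α) *
              ∫ s in Ioc a t, Φ' s * (Φ t - Φ s) ^ (α * (n:ℝ) + α - 1) * u₂ s := by
            rw [Finset.sum_range_succ, Real.Gamma_add_one hαn.ne', hx₀n]
            field_simp
            ring
  -- limit as n → ∞
  have hI₀ : IntegrableOn (fun τ => Φ' τ * u₂ τ) (Ioc a t) := by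
    obtain ⟨C, hC⟩ := isCompact_Icc.exists_bound_of_continuousOn hψ'_cont
    apply Integrable.bdd_mul
      (hu₂int.mono_set (fun x hx => ⟨hx.1.le, hx.2.trans ht.2⟩))
      hΦ'cont.aestronglyMeasurable
    exact Eventually.of_forall fun x => hC (π x) (hπ_mem x)
  have hJnonneg : ∀ n : ℕ,
      0 ≤ ∫ τ in Ioc a t, Φ' τ * (Φ t - Φ τ) ^ (α * (n:ℝ) - 1) * u₂ τ := by
    intro n
    apply setIntegral_nonneg measurableSet_Ioc
    intro τ hτ
    have hτab : τ ∈ Icc a b := ⟨hτ.1.le, hτ.2.trans ht.2⟩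
    have hbase : 0 ≤ Φ t - Φ τ := sub_nonneg.mpr (hΦmonoOn hτab ht hτ.2)
    exact mul_nonneg (mul_nonneg (hΦ'nonneg τ) (Real.rpow_nonneg hbase _)) (hu₂nonneg τ)
  have hJbound : ∀ n : ℕ, 1 ≤ n → 1 ≤ α * (n:ℝ) →
      (∫ τ in Ioc a t, Φ' τ * (Φ t - Φ τ) ^ (α * (n:ℝ) - 1) * u₂ τ)
        ≤ (Φ t - Φ a) ^ (α * (n:ℝ) - 1) * ∫ τ in Ioc a t, Φ' τ * u₂ τ := by
    intro n hn1 hαn1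
    calc (∫ τ in Ioc a t, Φ' τ * (Φ t - Φ τ) ^ (α * (n:ℝ) - 1) * u₂ τ)
        ≤ ∫ τ in Ioc a t, (Φ t - Φ a) ^ (α * (n:ℝ) - 1) * (Φ' τ * u₂ τ) := by
          apply setIntegral_mono_on (hIn n hn1) (hI₀.const_mul _) measurableSet_Ioc
          intro τ hτ
          have hτab : τ ∈ Icc a b := ⟨hτ.1.le, hτ.2.trans ht.2⟩
          have hbase : 0 ≤ Φ t - Φ τ := sub_nonneg.mpr (hΦmonoOn hτab ht hτ.2)
          have h2 : Φ t - Φ τ ≤ Φ t - Φ a := by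
            have := hΦmonoOn haI hτab hτ.1.le
            linarith
          have h3 : (Φ t - Φ τ) ^ (α * (n:ℝ) - 1) ≤ (Φ t - Φ a) ^ (α * (n:ℝ) - 1) :=
            Real.rpow_le_rpow hbase h2 (by linarith)
          calc Φ' τ * (Φ t - Φ τ) ^ (α * (n:ℝ) - 1) * u₂ τ
              ≤ Φ' τ * (Φ t - Φ a) ^ (α * (n:ℝ) - 1) * u₂ τ := by
                exact mul_le_mul_of_nonneg_right
                  (mul_le_mul_of_nonneg_left h3 (hΦ'nonneg τ)) (hu₂nonneg τ)
            _ = (Φ t - Φ a) ^ (α * (n:ℝ) - 1) * (Φ' τ * u₂ τ) := by ring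
      _ = (Φ t - Φ a) ^ (α * (n:ℝ) - 1) * ∫ τ in Ioc a t, Φ' τ * u₂ τ :=
          MeasureTheory.integral_const_mul _ _
  obtain ⟨q, hq1, hq0⟩ : ∃ q : ℕ, 1 ≤ α * (q:ℝ) ∧ 1 ≤ q := by
    refine ⟨⌈α⁻¹⌉₊ + 1, ?_, by omega⟩
    have h1 : (α⁻¹ : ℝ) ≤ ⌈α⁻¹⌉₊ := Nat.le_ceil _
    have h2 : (α⁻¹ : ℝ) ≤ ((⌈α⁻¹⌉₊ + 1 : ℕ) : ℝ) := by push_cast; linarith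
    calc (1:ℝ) = α * α⁻¹ := (mul_inv_cancel₀ hα.ne').symm
      _ ≤ α * ((⌈α⁻¹⌉₊ + 1 : ℕ) : ℝ) := by gcongr
  set I₀ : ℝ := ∫ τ in Ioc a t, Φ' τ * u₂ τ with hI₀def
  have hrem0 : ∀ᶠ n : ℕ in atTop, 0 ≤ (g t) ^ n * (Real.Gamma α) ^ n / Real.Gamma (α * n) *
      ∫ τ in Ioc a t, Φ' τ * (Φ t - Φ τ) ^ (α * (n:ℝ) - 1) * u₂ τ := by
    filter_upwards [eventually_ge_atTop 1] with n hn1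
    have hn' : (1:ℝ) ≤ (n:ℝ) := by exact_mod_cast hn1
    have hαn : 0 < α * (n:ℝ) := by nlinarith
    have hΓ := Real.Gamma_pos_of_pos hαn
    have hg0 := hg_nonneg t ht
    exact mul_nonneg (by positivity) (hJnonneg n)
  have hrem_le : ∀ᶠ n : ℕ in atTop, (g t) ^ n * (Real.Gamma α) ^ n / Real.Gamma (α * n) *
      (∫ τ in Ioc a t, Φ' τ * (Φ t - Φ τ) ^ (α * (n:ℝ) - 1) * u₂ τ)
      ≤ (x₀ ^ n / Real.Gamma (α * n)) * (I₀ / (Φ t - Φ a)) := by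
    filter_upwards [eventually_ge_atTop q] with n hnq
    have hn1 : 1 ≤ n := le_trans hq0 hnq
    have hn' : (1:ℝ) ≤ (n:ℝ) := by exact_mod_cast hn1
    have hαn : 0 < α * (n:ℝ) := by nlinarith
    have hαn1 : 1 ≤ α * (n:ℝ) := by
      have : (q:ℝ) ≤ (n:ℝ) := by exact_mod_cast hnq
      nlinarith
    have hΓ := Real.Gamma_pos_of_pos hαn
    have hg0 := hg_nonneg t ht
    have hCn : (0:ℝ) ≤ (g t) ^ n * (Real.Gamma α) ^ n / Real.Gamma (α * n) := by positivity
    have h1 := mul_le_mul_of_nonneg_left (hJbound n hn1 hαn1) hCn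
    apply le_trans h1
    have hx₀n : x₀ ^ n = (g t) ^ n * (Real.Gamma α) ^ n * (Φ t - Φ a) ^ (α * (n:ℝ)) := by
      rw [hx₀def, mul_pow, mul_pow]
      congr 1
      rw [← Real.rpow_natCast ((Φ t - Φ a) ^ α) n, ← Real.rpow_mul hΦta]
    have hDsub : (Φ t - Φ a) ^ (α * (n:ℝ) - 1)
        = (Φ t - Φ a) ^ (α * (n:ℝ)) / (Φ t - Φ a) := by
      rw [Real.rpow_sub hΦta_pos, Real.rpow_one]
    rw [hDsub, hx₀n]
    rw [div_mul_eq_mul_div, div_mul_eq_mul_div]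
    apply le_of_eq
    field_simp
  have hbnd_tendsto : Tendsto (fun n : ℕ => (x₀ ^ n / Real.Gamma (α * n)) *
      (I₀ / (Φ t - Φ a))) atTop (nhds 0) := by
    have := (aux_tendsto' hα hx₀).mul_const (I₀ / (Φ t - Φ a))
    simpa using this
  have hrem_tendsto : Tendsto (fun n : ℕ =>
      (g t) ^ n * (Real.Gamma α) ^ n / Real.Gamma (α * n) *
        ∫ τ in Ioc a t, Φ' τ * (Φ t - Φ τ) ^ (α * (n:ℝ) - 1) * u₂ τ)
      atTop (nhds 0) :=
    squeeze_zero' hrem0 hrem_le hbnd_tendsto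
  have hSum_tendsto : Tendsto (fun n : ℕ =>
      v t * ∑ k ∈ Finset.range n, x₀ ^ k / Real.Gamma (α * k + 1)) atTop
      (nhds (v t * ∑' k : ℕ, x₀ ^ k / Real.Gamma (α * k + 1))) :=
    (hsum.hasSum.tendsto_sum_nat).const_mul (v t)
  have hfinal := hSum_tendsto.add hrem_tendsto
  rw [add_zero] at hfinal
  apply ge_of_tendsto hfinal
  filter_upwards [eventually_ge_atTop 1] with n hn1
  exact main n hn1
end
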